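/- Let A be an m×m real symmetric matrix partitioned as A = [[W, A21ᵀ],[A21, A22]] where the top-left c×c block W is invertible, and let C = [W; A21] ∈ ℝ^{m×c} (W stacked on top of A21) be the first c columns of A. Define T0 = A21ᵀ A21, T2 = T0 W⁻¹, and T3 = W⁻¹ (A21ᵀ A22 A21) W⁻¹. Then the c×c matrix I_c + W⁻¹ T2 is invertible, and, setting T1 = W⁻¹ (I_c + W⁻¹ T2)⁻¹, the intersection matrix of the modified Nyström method satisfies C⁺ A (C⁺)ᵀ = T1 (W + T2 + T2ᵀ + T3) T1ᵀ. -/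

import Mathlib

open Matrix

/-- `P` is the Moore–Penrose pseudoinverse of `M`. -/
def IsMoorePenrose {m n : Type*} [Fintype m] [Fintype n]
    (M : Matrix m n ℝ) (P : Matrix n m ℝ) : Prop :=
  M * P * M = M ∧ P * M * P = P ∧ (M * P)ᵀ = M * P ∧ (P * M)ᵀ = P * M

/-- Fast computation of the intersection matrix of the
modified Nyström method: with `T0 = A21ᵀ A21`, `T2 = T0 W⁻¹`,
`T3 = W⁻¹ (A21ᵀ A22 A21) W⁻¹`, the matrix `I + W⁻¹ T2` is invertible and,
with `T1 = W⁻¹ (I + W⁻¹ T2)⁻¹`, one has `C⁺ A (C⁺)ᵀ = T1 (W + T2 + T2ᵀ + T3) T1ᵀ`. -/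
theorem intersection_matrix_formula {c r : ℕ}
    (W : Matrix (Fin c) (Fin c) ℝ) (A21 : Matrix (Fin r) (Fin c) ℝ)
    (A22 : Matrix (Fin r) (Fin r) ℝ) (hW : Wᵀ = W) (hA22 : A22ᵀ = A22)
    (hWinv : IsUnit W.det)
    (A : Matrix (Fin c ⊕ Fin r) (Fin c ⊕ Fin r) ℝ)
    (hA : A = Matrix.fromBlocks W A21ᵀ A21 A22)
    (C : Matrix (Fin c ⊕ Fin r) (Fin c) ℝ)
    (hC : C = Matrix.fromRows W A21)
    (Cp : Matrix (Fin c) (Fin c ⊕ Fin r) ℝ) (hCp : IsMoorePenrose C Cp)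
    (T0 T2 T3 : Matrix (Fin c) (Fin c) ℝ)
    (hT0 : T0 = A21ᵀ * A21) (hT2 : T2 = T0 * W⁻¹)
    (hT3 : T3 = W⁻¹ * (A21ᵀ * A22 * A21) * W⁻¹) :
    IsUnit (1 + W⁻¹ * T2).det ∧
      ∀ T1 : Matrix (Fin c) (Fin c) ℝ, T1 = W⁻¹ * (1 + W⁻¹ * T2)⁻¹ →
        Cp * A * Cpᵀ = T1 * (W + T2 + T2ᵀ + T3) * T1ᵀ := by
  obtain ⟨h1, h2, h3, h4⟩ := hCp
  have hWl : W⁻¹ * W = 1 := nonsing_inv_mul W hWinv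
  have hWr : W * W⁻¹ = 1 := mul_nonsing_inv W hWinv
  set M : Matrix (Fin c) (Fin c) ℝ := W * W + A21ᵀ * A21 with hMdef
  have hCtC : Cᵀ * C = M := by
    rw [hC, transpose_fromRows, fromCols_mul_fromRows, hW]
  -- M is invertible
  have hMunit : IsUnit M := by
    rw [← hCtC, ← Matrix.mulVec_injective_iff_isUnit]
    have hker : LinearMap.ker (Cᵀ * C).mulVecLin = ⊥ := by
      rw [Matrix.ker_mulVecLin_transpose_mul_self]
      rw [LinearMap.ker_eq_bot']
      intro x hx
      simp only [mulVecLin_apply, hC, fromRows_mulVec] at hx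
      have hWx : W *ᵥ x = 0 := by
        funext i
        exact congrFun hx (Sum.inl i)
      have hWinj : Function.Injective W.mulVec :=
        Matrix.mulVec_injective_iff_isUnit.mpr ((Matrix.isUnit_iff_isUnit_det W).mpr hWinv)
      have := hWinj (by rw [hWx, Matrix.mulVec_zero] : W *ᵥ x = W *ᵥ 0)
      exact this
    have : Function.Injective (Cᵀ * C).mulVecLin := by
      rw [← LinearMap.ker_eq_bot]; exact hker
    simpa [← Matrix.coe_mulVecLin] using this
  have hMdet : IsUnit M.det := (Matrix.isUnit_iff_isUnit_det M).mp hMunit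
  have hMl : M⁻¹ * M = 1 := nonsing_inv_mul M hMdet
  have hMr : M * M⁻¹ = 1 := mul_nonsing_inv M hMdet
  have hMt : Mᵀ = M := by
    rw [hMdef]; simp [transpose_add, transpose_mul, hW]
  have hMit : (M⁻¹)ᵀ = M⁻¹ := by rw [Matrix.transpose_nonsing_inv, hMt]
  have hWit : (W⁻¹)ᵀ = W⁻¹ := by rw [Matrix.transpose_nonsing_inv, hW]
  -- key identity
  have e1 : 1 + W⁻¹ * T2 = W⁻¹ * M * W⁻¹ := by
    rw [hT2, hT0, hMdef]
    simp [Matrix.mul_add, Matrix.add_mul, Matrix.mul_assoc, hWl, hWr]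
  have hWidet : IsUnit (W⁻¹).det := isUnit_nonsing_inv_det W hWinv
  have hdet1 : IsUnit (1 + W⁻¹ * T2).det := by
    rw [e1, Matrix.det_mul, Matrix.det_mul]
    exact (hWidet.mul hMdet).mul hWidet
  refine ⟨hdet1, ?_⟩
  intro T1 hT1
  -- uniqueness of pseudoinverse: Cp = M⁻¹ * Cᵀ
  set Q : Matrix (Fin c) (Fin c ⊕ Fin r) ℝ := M⁻¹ * Cᵀ with hQdef
  have hQC : Q * C = 1 := by rw [hQdef, Matrix.mul_assoc, hCtC, hMl]
  have hCpC : Cp * C = 1 := by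
    have : Q * (C * Cp * C) = Q * C := by rw [h1]
    calc Cp * C = (Q * C) * (Cp * C) := by rw [hQC, Matrix.one_mul]
      _ = Q * (C * Cp * C) := by simp only [Matrix.mul_assoc]
      _ = Q * C := this
      _ = 1 := hQC
  have hCpCpT : Cp = Cp * Cpᵀ * Cᵀ := by
    calc Cp = Cp * C * Cp := h2.symm
      _ = Cp * (C * Cp)ᵀ := by rw [h3, Matrix.mul_assoc]
      _ = Cp * (Cpᵀ * Cᵀ) := by rw [Matrix.transpose_mul]
      _ = Cp * Cpᵀ * Cᵀ := by rw [Matrix.mul_assoc]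
  have hCpQ : Cp = Q := by
    have hCt : Cᵀ = Cᵀ * C * Q := by
      rw [hCtC, hQdef, ← Matrix.mul_assoc, hMr, Matrix.one_mul]
    calc Cp = Cp * Cpᵀ * Cᵀ := hCpCpT
      _ = Cp * Cpᵀ * (Cᵀ * C * Q) := by rw [← hCt]
      _ = (Cp * Cpᵀ * Cᵀ) * (C * Q) := by simp only [Matrix.mul_assoc]
      _ = Cp * (C * Q) := by rw [← hCpCpT]
      _ = (Cp * C) * Q := by rw [Matrix.mul_assoc]
      _ = Q := by rw [hCpC, Matrix.one_mul]
  -- compute T1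
  have hT1' : T1 = M⁻¹ * W := by
    rw [hT1, e1, Matrix.mul_inv_rev, Matrix.mul_inv_rev,
      Matrix.nonsing_inv_nonsing_inv W hWinv, ← Matrix.mul_assoc, ← Matrix.mul_assoc,
      hWl, Matrix.one_mul]
  have hT1t : T1ᵀ = W * M⁻¹ := by rw [hT1', Matrix.transpose_mul, hMit, hW]
  have hQt : Qᵀ = C * M⁻¹ := by
    rw [hQdef, Matrix.transpose_mul, hMit, Matrix.transpose_transpose]
  -- both sides are M⁻¹ * X * M⁻¹; compare middles
  have hmidL : Cᵀ * A * C = W * W * W + A21ᵀ * A21 * W + W * (A21ᵀ * A21) + A21ᵀ * A22 * A21 := by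
    rw [hC, hA, transpose_fromRows, fromCols_mul_fromBlocks, fromCols_mul_fromRows, hW]
    simp only [Matrix.add_mul, Matrix.mul_assoc]
    abel
  have hmidR : W * (W + T2 + T2ᵀ + T3) * W
      = W * W * W + A21ᵀ * A21 * W + W * (A21ᵀ * A21) + A21ᵀ * A22 * A21 := by
    rw [hT2, hT0, hT3]
    simp only [Matrix.transpose_mul, hWit, hW, Matrix.transpose_transpose]
    have hWr' : ∀ X : Matrix (Fin c) (Fin c) ℝ, W * (W⁻¹ * X) = X := fun X => by
      rw [← Matrix.mul_assoc, hWr, Matrix.one_mul]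
    simp only [Matrix.mul_add, Matrix.add_mul, Matrix.mul_assoc, hWl, hWr', Matrix.mul_one]
    abel
  rw [hCpQ, hQdef, hQt, hT1t, hT1']
  calc M⁻¹ * Cᵀ * A * (C * M⁻¹) = M⁻¹ * (Cᵀ * A * C) * M⁻¹ := by
        simp only [Matrix.mul_assoc]
    _ = M⁻¹ * (W * (W + T2 + T2ᵀ + T3) * W) * M⁻¹ := by rw [hmidL, hmidR]
    _ = M⁻¹ * W * (W + T2 + T2ᵀ + T3) * (W * M⁻¹) := by simp only [Matrix.mul_assoc]
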